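/- Let C ≥ 1 bound both diam(μ_n) and (μ_n), let M ∈ ℕ* with M ≥ ‖T°x*‖ for all x* ∈ X₀, let φ satisfy ∀k,n ∃N ∈ [n; φ(k,n)] (‖x_N − x_{N+1}‖/μ_N < 1/(k+1)) and be monotone in k and n, let θ be a rate of convergence for λ_n → 0, and let ϖ be a modulus of uniform continuity for T w.r.t. H*. Then Φ(k,n) := φ(⌈2C(k+1)⌉ − 1, max{θ(Mϖ(k)+M−1), n}) is a liminf-bound for (x_n) w.r.t. (Γ_k): for all k, n there exists N ∈ [n; Φ(k,n)] with x_N ∈ Γ_k. -/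
import Mathlib


/-- The approximation sets `Γ_k` for Moudafi's algorithm. -/
def Gamma {X : Type*} [NormedAddCommGroup X] [NormedSpace ℝ X]
    (X0 : Set X) (T : X → Set X) (Tc : X → X) (JS : ℝ → X → X) (μ : ℕ → ℝ) (k : ℕ) :
    Set X :=
  {xs ∈ X0 | ∃ ys : X,
    |‖ys‖ - ‖Tc xs‖| ≤ 1 / ((k : ℝ) + 1) ∧
    (∃ w ∈ T xs, ‖ys - w‖ ≤ 1 / ((k : ℝ) + 1)) ∧
    ∀ i ≤ k, ‖xs - JS (μ i) (xs + μ i • ys)‖ ≤ 1 / ((k : ℝ) + 1)}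

/-- liminf-bound: `Φ(k,n) := φ(⌈2C(k+1)⌉ − 1, max{θ(Mϖ(k)+M−1), n})` is a
liminf-bound for `(x_n)` w.r.t. `(Γ_k)`: for all `k, n` there is `N ∈ [n; Φ(k,n)]` with
`x_N ∈ Γ_k`. -/
theorem stmt15 {X : Type*} [NormedAddCommGroup X] [NormedSpace ℝ X]
    (T S : X → Set X) (Tc : X → X) (JS JT : ℝ → X → X) (Tl : ℝ → X → X)
    (μ lam : ℕ → ℝ) (hμ : ∀ n, 0 < μ n) (hlam : ∀ n, 0 < lam n)
    (x : ℕ → X)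
    (hrec : ∀ n, x (n + 1) = JS (μ n) (x n + μ n • Tl (lam n) (x n)))
    (X0 : Set X) (hx0 : ∀ n, x n ∈ X0)
    (C : ℝ) (hC1 : 1 ≤ C) (hCdiam : ∀ n m, |μ n - μ m| ≤ C) (hCbound : ∀ n, μ n ≤ C)
    (M : ℕ) (hM1 : 1 ≤ M) (hM : ∀ u ∈ X0, ‖Tc u‖ ≤ (M : ℝ))
    (φ : ℕ → ℕ → ℕ)
    (hφ : ∀ k n : ℕ, ∃ N, n ≤ N ∧ N ≤ φ k n ∧
      ‖x N - x (N + 1)‖ / μ N < 1 / ((k : ℝ) + 1))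
    (hφmono : ∀ k k' n n' : ℕ, k ≤ k' → n ≤ n' → φ k n ≤ φ k' n')
    (θ : ℕ → ℕ) (hθ : ∀ k n : ℕ, θ k ≤ n → lam n ≤ 1 / ((k : ℝ) + 1))
    (ϖ : ℕ → ℕ)
    (hϖ : ∀ k : ℕ, ∀ u v : X, ‖u - v‖ ≤ 1 / ((ϖ k : ℝ) + 1) →
      ∀ p ∈ T u, ∃ q ∈ T v, ‖p - q‖ ≤ 1 / ((k : ℝ) + 1))
    (hineq : ∀ n i : ℕ,
      ‖x n - JS (μ i) (x n + μ i • Tl (lam n) (x n))‖ ≤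
        ‖x n - x (n + 1)‖ + |μ n - μ i| * (‖x n - x (n + 1)‖ / μ n))
    (hres : ∀ n : ℕ, ‖x n - JT (lam n) (x n)‖ ≤ lam n * ‖Tc (x n)‖)
    (hyos : ∀ n : ℕ, Tl (lam n) (x n) ∈ T (JT (lam n) (x n)))
    (hTlbound : ∀ n : ℕ, ‖Tl (lam n) (x n)‖ ≤ ‖Tc (x n)‖)
    (hmin : ∀ n : ℕ, ∀ z ∈ T (x n), ‖Tc (x n)‖ ≤ ‖z‖)
    (k n : ℕ) :
    ∃ N, n ≤ N ∧
      N ≤ φ (⌈2 * C * ((k : ℝ) + 1)⌉₊ - 1) (max (θ (M * ϖ k + M - 1)) n) ∧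
      x N ∈ Gamma X0 T Tc JS μ k := by
  obtain ⟨N, hmN, hNφ, hr⟩ := hφ (⌈2 * C * ((k : ℝ) + 1)⌉₊ - 1)
    (max (θ (M * ϖ k + M - 1)) n)
  refine ⟨N, le_trans (le_max_right _ _) hmN, hNφ, ?_⟩
  have hμN := hμ N
  have hk1 : (0:ℝ) < (k:ℝ) + 1 := by positivity
  have hC0 : (0:ℝ) < C := lt_of_lt_of_le one_pos hC1
  have hCk : (0:ℝ) < 2 * C * ((k:ℝ)+1) := by positivity
  have hone : 1 ≤ ⌈2 * C * ((k : ℝ) + 1)⌉₊ := Nat.one_le_ceil_iff.mpr hCk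
  have hceil : (2 * C * ((k:ℝ)+1)) ≤ ((⌈2 * C * ((k : ℝ) + 1)⌉₊ - 1 : ℕ) : ℝ) + 1 := by
    have h2 : ((⌈2 * C * ((k : ℝ) + 1)⌉₊ - 1 : ℕ) : ℝ) + 1
        = (⌈2 * C * ((k : ℝ) + 1)⌉₊ : ℝ) := by
      rw [Nat.cast_sub hone]; push_cast; ring
    rw [h2]; exact Nat.le_ceil _
  set r := ‖x N - x (N + 1)‖ / μ N with hrdef
  have hr0 : 0 ≤ r := div_nonneg (norm_nonneg _) hμN.le
  have hr2 : r ≤ 1 / (2*C*((k:ℝ)+1)) :=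
    le_trans hr.le (one_div_le_one_div_of_le hCk hceil)
  have hd : ‖x N - x (N + 1)‖ = r * μ N := (div_mul_cancel₀ _ (ne_of_gt hμN)).symm
  -- lam N bound
  have hA1 : 1 ≤ M * ϖ k + M := le_trans hM1 (Nat.le_add_left M (M * ϖ k))
  have hlamN : lam N ≤ 1 / ((M:ℝ) * ((ϖ k : ℝ) + 1)) := by
    have := hθ (M * ϖ k + M - 1) N (le_trans (le_max_left _ _) hmN)
    have hA : ((M * ϖ k + M - 1 : ℕ) : ℝ) + 1 = (M:ℝ) * ((ϖ k : ℝ) + 1) := by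
      rw [Nat.cast_sub hA1]; push_cast; ring
    rwa [hA] at this
  have hM0 : (0:ℝ) < (M:ℝ) := by exact_mod_cast hM1
  have hnear : ‖JT (lam N) (x N) - x N‖ ≤ 1 / ((ϖ k : ℝ) + 1) := by
    rw [norm_sub_rev]
    calc ‖x N - JT (lam N) (x N)‖ ≤ lam N * ‖Tc (x N)‖ := hres N
      _ ≤ lam N * (M:ℝ) := mul_le_mul_of_nonneg_left (hM _ (hx0 N)) (hlam N).le
      _ ≤ (1 / ((M:ℝ) * ((ϖ k : ℝ) + 1))) * (M:ℝ) :=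
          mul_le_mul_of_nonneg_right hlamN hM0.le
      _ = 1 / ((ϖ k : ℝ) + 1) := by
          field_simp
  obtain ⟨q, hq, hqd⟩ := hϖ k _ _ hnear _ (hyos N)
  refine ⟨hx0 N, Tl (lam N) (x N), ?_, ⟨q, hq, hqd⟩, ?_⟩
  · rw [abs_le]
    have h1 : ‖q‖ - ‖Tl (lam N) (x N)‖ ≤ ‖Tl (lam N) (x N) - q‖ := by
      rw [norm_sub_rev]; exact norm_sub_norm_le _ _
    have h2 := hmin N q hq
    have h3 := hTlbound N
    constructor <;> linarith
  · intro i hi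
    have h1 := hineq N i
    have h2 : ‖x N - x (N + 1)‖ + |μ N - μ i| * r ≤ 1 / ((k:ℝ) + 1) := by
      have e1 : r * μ N ≤ r * C := mul_le_mul_of_nonneg_left (hCbound N) hr0
      have e2 : |μ N - μ i| * r ≤ C * r := mul_le_mul_of_nonneg_right (hCdiam N i) hr0
      have e3 : 2 * C * r ≤ 2 * C * (1 / (2*C*((k:ℝ)+1))) :=
        mul_le_mul_of_nonneg_left hr2 (by positivity)
      have e4 : 2 * C * (1 / (2*C*((k:ℝ)+1))) = 1 / ((k:ℝ)+1) := by
        field_simp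
      rw [hd]; linarith
    exact le_trans h1 h2
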